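/- Fix N ≥ 1, complex numbers p₁, …, p_N, pairwise distinct complex numbers τ₁, …, τ_N, and η ∈ ℂ with η ≠ 0. Let L be the trigonometric Ruijsenaars–Schneider Lax matrix, i.e. the N×N complex matrix with entries L_{ij} = (∏_{k≠j} (ητ_i − η⁻¹τ_k) / ∏_{k≠i} (τ_i − τ_k))·p_j. Then the characteristic polynomial of L is given by det(u·1_N − L) = Σ_{r=0}^{N} (−1)^r u^{N−r} · T_r, where T_r = Σ_{I ⊆ {1,…,N}, |I| = r} (∏_{i∈I, j∉I} (ητ_i − η⁻¹τ_j)/(τ_i − τ_j)) · ∏_{k∈I} p_k. -/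

import Mathlib

open Finset Matrix Polynomial

/-- The trigonometric Ruijsenaars–Schneider Lax matrix
`L_{ij} = (∏_{k≠j} (ητ_i − η⁻¹τ_k) / ∏_{k≠i} (τ_i − τ_k)) p_j`. -/
noncomputable def trsLax (N : ℕ) (p τ : Fin N → ℂ) (η : ℂ) :
    Matrix (Fin N) (Fin N) ℂ :=
  Matrix.of fun i j =>
    (∏ k ∈ Finset.univ.erase j, (η * τ i - η⁻¹ * τ k)) /
        (∏ k ∈ Finset.univ.erase i, (τ i - τ k)) * p j


variable {n : Type*} [Fintype n] [DecidableEq n]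

lemma det_piecewise_one (A : Matrix n n ℂ) (S : Finset n) :
    Matrix.det (S.piecewise (1 : Matrix n n ℂ) A)
      = Matrix.det (Matrix.of fun i j : {x // x ∈ Sᶜ} => A i j) := by
  classical
  have e := Equiv.sumCompl (fun x => x ∈ Sᶜ)
  rw [← Matrix.det_submatrix_equiv_self (Equiv.sumCompl (fun x => x ∈ Sᶜ))
    (S.piecewise (1 : Matrix n n ℂ) A)]
  have : Matrix.submatrix (S.piecewise (1 : Matrix n n ℂ) A)
      (Equiv.sumCompl (fun x => x ∈ Sᶜ)) (Equiv.sumCompl (fun x => x ∈ Sᶜ))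
      = Matrix.fromBlocks (Matrix.of fun i j : {x // x ∈ Sᶜ} => A i j)
          (Matrix.of fun (i : {x // x ∈ Sᶜ}) (j : {x // ¬ x ∈ Sᶜ}) => A i j)
          0 1 := by
    ext i j
    cases i with
    | inl i =>
      cases j with
      | inl j =>
        erw [Matrix.submatrix_apply, Finset.piecewise_eq_of_notMem _ _ _ (Finset.mem_compl.mp i.2)]
        simp [Matrix.submatrix_apply, Finset.piecewise_eq_of_notMem _ _ _
          (Finset.mem_compl.mp i.2)]
      | inr j =>
        erw [Matrix.submatrix_apply, Finset.piecewise_eq_of_notMem _ _ _ (Finset.mem_compl.mp i.2)]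
        simp [Matrix.submatrix_apply, Finset.piecewise_eq_of_notMem _ _ _
          (Finset.mem_compl.mp i.2)]
    | inr i =>
      have hi : (i : n) ∈ S := by have := i.2; simp only [Finset.mem_compl, not_not] at this; exact this
      cases j with
      | inl j =>
        have hj : (j : n) ∈ Sᶜ := j.2
        have : (i : n) ≠ (j : n) := by
          intro h; rw [h] at hi; exact Finset.mem_compl.mp hj hi
        erw [Matrix.submatrix_apply, Finset.piecewise_eq_of_mem _ _ _ hi]
        simp [Matrix.submatrix_apply, Finset.piecewise_eq_of_mem _ _ _ hi,
          Matrix.one_apply, this]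
      | inr j =>
        erw [Matrix.submatrix_apply, Finset.piecewise_eq_of_mem _ _ _ hi]
        simp [Matrix.submatrix_apply, Finset.piecewise_eq_of_mem _ _ _ hi,
          Matrix.one_apply, Subtype.ext_iff]
        congr
  rw [this, Matrix.det_fromBlocks_zero₂₁, Matrix.det_one, mul_one]

lemma det_smul_one_add (u : ℂ) (A : Matrix n n ℂ) :
    (u • (1 : Matrix n n ℂ) + A).det
      = ∑ S : Finset n, u ^ S.card *
          Matrix.det (Matrix.of fun i j : {x // x ∈ Sᶜ} => A i j) := by
  classical
  have h0 : (u • (1 : Matrix n n ℂ) + A).det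
      = Matrix.detRowAlternating.toMultilinearMap ((fun i => u • (1 : Matrix n n ℂ) i) + (fun i => A i)) := by
    rfl
  rw [h0, MultilinearMap.map_add_univ]
  refine Finset.sum_congr rfl fun S _ => ?_
  have h1 : S.piecewise (fun i => u • (1 : Matrix n n ℂ) i) (fun i => A i)
      = S.piecewise (fun i => u • (S.piecewise (1 : Matrix n n ℂ) A) i)
          (S.piecewise (1 : Matrix n n ℂ) A) := by
    ext i j
    by_cases h : i ∈ S <;>
      simp [Finset.piecewise_eq_of_mem _ _ _, Finset.piecewise, h]
  rw [h1]
  have h2 := (Matrix.detRowAlternating (R := ℂ) (n := n)).toMultilinearMap.map_piecewise_smul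
    (fun _ => u) (S.piecewise (1 : Matrix n n ℂ) A) S
  rw [h2, Finset.prod_const, smul_eq_mul]
  congr 1
  exact det_piecewise_one A S


lemma det_core (r : ℕ) (z : Fin r → ℂ) (η : ℂ) (hη : η ≠ 0)
    (hz : Function.Injective z) :
    Matrix.det (Matrix.of fun a b : Fin r =>
        ∏ c ∈ Finset.univ.erase b, (η * z a - η⁻¹ * z c))
      = ∏ b : Fin r, ∏ c ∈ Finset.univ.erase b, (z b - z c) := by
  classical
  set q : Fin r → Polynomial ℂ :=
    fun b => ∏ c ∈ Finset.univ.erase b, (X - C (η⁻¹ * z c)) with hqdef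
  set A : Matrix (Fin r) (Fin r) ℂ := Matrix.of fun m b => (q b).coeff m with hA
  have hcard : ∀ b : Fin r, (Finset.univ.erase b).card = r - 1 := by
    intro b; rw [Finset.card_erase_of_mem (Finset.mem_univ b)]; simp
  have hdeg : ∀ b : Fin r, (q b).natDegree < r := by
    intro b
    have h1 : (q b).natDegree ≤ ∑ c ∈ Finset.univ.erase b, (X - C (η⁻¹ * z c)).natDegree :=
      Polynomial.natDegree_prod_le _ _
    have h2 : ∀ c : Fin r, (X - C (η⁻¹ * z c)).natDegree = 1 := fun c => natDegree_X_sub_C _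
    have h3 : (q b).natDegree ≤ r - 1 := by
      refine le_trans h1 ?_
      rw [Finset.sum_congr rfl fun c _ => h2 c, Finset.sum_const, smul_eq_mul, mul_one, hcard]
    have : 0 < r := b.pos
    omega
  have hmul : ∀ v : Fin r → ℂ,
      Matrix.vandermonde v * A = Matrix.of fun a b => (q b).eval (v a) := by
    intro v
    ext a b
    rw [Matrix.mul_apply]
    simp only [Matrix.vandermonde, hA, Matrix.of_apply]
    rw [Polynomial.eval_eq_sum_range' (hdeg b), ← Fin.sum_univ_eq_sum_range]
    exact Finset.sum_congr rfl fun m _ => by ring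
  have hdiag : Matrix.vandermonde (fun a => η⁻¹ * z a) * A
      = Matrix.diagonal (fun b => ∏ c ∈ Finset.univ.erase b, (η⁻¹ * z b - η⁻¹ * z c)) := by
    rw [hmul]
    ext a b
    by_cases h : a = b
    · subst h
      simp [Matrix.diagonal, hqdef, Polynomial.eval_prod]
    · simp only [Matrix.of_apply, Matrix.diagonal_apply_ne _ h, hqdef, Polynomial.eval_prod]
      refine Finset.prod_eq_zero (Finset.mem_erase.mpr ⟨h, Finset.mem_univ a⟩) ?_
      simp
  have hQ : Matrix.vandermonde (fun a => η * z a) * A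
      = Matrix.of (fun a b : Fin r => ∏ c ∈ Finset.univ.erase b, (η * z a - η⁻¹ * z c)) := by
    rw [hmul]
    ext a b
    simp [hqdef, Polynomial.eval_prod]
  -- abbreviations
  set P : ℂ := ∏ i : Fin r, ∏ j ∈ Finset.Ioi i, (z j - z i) with hP
  set C' : ℕ := ∑ i : Fin r, (Finset.Ioi i).card with hC'
  set K : ℂ := ∏ b : Fin r, ∏ c ∈ Finset.univ.erase b, (z b - z c) with hK
  have hPne : P ≠ 0 := by
    rw [hP]
    refine Finset.prod_ne_zero_iff.mpr fun i _ => Finset.prod_ne_zero_iff.mpr fun j hj => ?_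
    have : i ≠ j := (Finset.mem_Ioi.mp hj).ne
    exact sub_ne_zero_of_ne fun h => this (hz h).symm
  have hVx : (Matrix.vandermonde (fun a => η * z a)).det = η ^ C' * P := by
    rw [Matrix.det_vandermonde, hP, hC', ← Finset.prod_pow_eq_pow_sum, ← Finset.prod_mul_distrib]
    refine Finset.prod_congr rfl fun i _ => ?_
    rw [← Finset.prod_const, ← Finset.prod_mul_distrib]
    exact Finset.prod_congr rfl fun j _ => by ring
  have hVy : (Matrix.vandermonde (fun a => η⁻¹ * z a)).det = (η⁻¹) ^ C' * P := by
    rw [Matrix.det_vandermonde, hP, hC', ← Finset.prod_pow_eq_pow_sum, ← Finset.prod_mul_distrib]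
    refine Finset.prod_congr rfl fun i _ => ?_
    rw [← Finset.prod_const, ← Finset.prod_mul_distrib]
    exact Finset.prod_congr rfl fun j _ => by ring
  have hD : (∏ b : Fin r, ∏ c ∈ Finset.univ.erase b, (η⁻¹ * z b - η⁻¹ * z c))
      = (η⁻¹) ^ (r * (r - 1)) * K := by
    have step : ∀ b : Fin r, (∏ c ∈ Finset.univ.erase b, (η⁻¹ * z b - η⁻¹ * z c))
        = (η⁻¹) ^ (r - 1) * ∏ c ∈ Finset.univ.erase b, (z b - z c) := by
      intro b
      rw [← hcard b, ← Finset.prod_const, ← Finset.prod_mul_distrib]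
      exact Finset.prod_congr rfl fun c _ => by ring
    rw [Finset.prod_congr rfl fun b _ => step b, Finset.prod_mul_distrib,
      Finset.prod_const, ← pow_mul, Finset.card_univ, Fintype.card_fin, hK, Nat.mul_comm (r - 1) r]
  have hCC : C' + C' = r * (r - 1) := by
    have h1 : C' = ∑ i ∈ Finset.range r, (r - 1 - i) := by
      rw [hC', ← Fin.sum_univ_eq_sum_range]
      exact Finset.sum_congr rfl fun i _ => Fin.card_Ioi i
    have h2 : ∑ i ∈ Finset.range r, (r - 1 - i) = ∑ i ∈ Finset.range r, i :=
      Finset.sum_range_reflect (fun i => i) r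
    have h3 := Finset.sum_range_id_mul_two r
    omega
  -- main identity
  have h1 : (Matrix.of (fun a b : Fin r =>
        ∏ c ∈ Finset.univ.erase b, (η * z a - η⁻¹ * z c))).det
        * (Matrix.vandermonde (fun a => η⁻¹ * z a)).det
      = (Matrix.vandermonde (fun a => η * z a)).det
        * (∏ b : Fin r, ∏ c ∈ Finset.univ.erase b, (η⁻¹ * z b - η⁻¹ * z c)) := by
    rw [← hQ, ← Matrix.det_diagonal
      (d := fun b => ∏ c ∈ Finset.univ.erase b, (η⁻¹ * z b - η⁻¹ * z c)), ← hdiag,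
      Matrix.det_mul, Matrix.det_mul]
    ring
  rw [hVy, hVx, hD] at h1
  have hηC : (η : ℂ) ^ C' ≠ 0 := pow_ne_zero _ hη
  have hrr : (η⁻¹ : ℂ) ^ (r * (r - 1)) = (η ^ C')⁻¹ * (η ^ C')⁻¹ := by
    rw [← hCC, pow_add, inv_pow]
  rw [hrr] at h1
  have h2 : (Matrix.of (fun a b : Fin r =>
        ∏ c ∈ Finset.univ.erase b, (η * z a - η⁻¹ * z c))).det * ((η⁻¹) ^ C' * P)
      = K * ((η⁻¹) ^ C' * P) := by
    rw [h1]
    field_simp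
    rw [one_div, inv_pow, mul_comm (η ^ C') K, mul_assoc, mul_inv_cancel₀ hηC, mul_one]
  have hne : (η⁻¹ : ℂ) ^ C' * P ≠ 0 :=
    mul_ne_zero (pow_ne_zero _ (inv_ne_zero hη)) hPne
  exact mul_right_cancel₀ hne h2

lemma trs_minor (N : ℕ) (p τ : Fin N → ℂ) (hτ : Function.Injective τ) (η : ℂ) (hη : η ≠ 0)
    (S : Finset (Fin N)) :
    Matrix.det (Matrix.of fun i j : {x // x ∈ S} => trsLax N p τ η i j)
      = (∏ i ∈ S, ∏ j ∈ Sᶜ, (η * τ i - η⁻¹ * τ j) / (τ i - τ j)) * ∏ k ∈ S, p k := by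
  classical
  set σ : Fin S.card ↪o Fin N := S.orderEmbOfFin rfl with hσ
  have hmem : ∀ a, σ a ∈ S := fun a => S.orderEmbOfFin_mem rfl a
  have hinj : Function.Injective σ := σ.injective
  have hmap : Finset.map σ.toEmbedding Finset.univ = S := by
    apply Finset.coe_injective
    rw [Finset.coe_map, Finset.coe_univ, Set.image_univ]
    exact S.range_orderEmbOfFin rfl
  have hsplit : ∀ (f : Fin N → ℂ) (i : Fin N), i ∈ S →
      ∏ k ∈ Finset.univ.erase i, f k
        = (∏ j ∈ Sᶜ, f j) * ∏ k ∈ S.erase i, f k := by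
    intro f i hi
    rw [← Finset.prod_union (by
      simp only [Finset.disjoint_left, Finset.mem_compl, Finset.mem_erase]
      tauto)]
    apply Finset.prod_congr _ fun _ _ => rfl
    ext k
    simp only [Finset.mem_erase, Finset.mem_univ, and_true, Finset.mem_union,
      Finset.mem_compl]
    constructor
    · intro hk
      by_cases h : k ∈ S
      · exact Or.inr ⟨hk, h⟩
      · exact Or.inl h
    · rintro (h | ⟨h1, h2⟩)
      · intro he; exact h (he ▸ hi)
      · exact h1
  have herase : ∀ b : Fin S.card,
      S.erase (σ b) = Finset.map σ.toEmbedding (Finset.univ.erase b) := by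
    intro b
    ext k
    simp only [Finset.mem_erase, Finset.mem_map, Finset.mem_univ, and_true,
      RelEmbedding.coe_toEmbedding]
    constructor
    · rintro ⟨hk1, hk2⟩
      rw [← hmap] at hk2
      simp only [Finset.mem_map, RelEmbedding.coe_toEmbedding, Finset.mem_univ] at hk2
      obtain ⟨c, _, rfl⟩ := hk2
      exact ⟨c, fun h => hk1 (h ▸ rfl), rfl⟩
    · rintro ⟨c, hc, rfl⟩
      exact ⟨fun h => hc (hinj h), hmem c⟩
  -- diag factorization
  set e : Fin S.card ≃ {x // x ∈ S} := (S.orderIsoOfFin rfl).toEquiv with he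
  have hcoe : ∀ a : Fin S.card, ((e a : {x // x ∈ S}) : Fin N) = σ a := fun a =>
    S.coe_orderIsoOfFin_apply rfl a
  rw [← Matrix.det_submatrix_equiv_self e]
  have hfact : (Matrix.of fun i j : {x // x ∈ S} => trsLax N p τ η i j).submatrix e e
      = Matrix.diagonal (fun a =>
          (∏ j ∈ Sᶜ, (η * τ (σ a) - η⁻¹ * τ j)) /
            ((∏ j ∈ Sᶜ, (τ (σ a) - τ j)) *
              ∏ c ∈ Finset.univ.erase a, (τ (σ a) - τ (σ c)))) *
        (Matrix.of fun a b : Fin S.card =>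
          ∏ c ∈ Finset.univ.erase b, (η * τ (σ a) - η⁻¹ * τ (σ c))) *
        Matrix.diagonal (fun b => p (σ b)) := by
    ext a b
    rw [Matrix.mul_diagonal, Matrix.diagonal_mul]
    simp only [Matrix.submatrix_apply, Matrix.of_apply, hcoe, trsLax, Matrix.of_apply]
    rw [hsplit (fun k => η * τ (σ a) - η⁻¹ * τ k) (σ b) (hmem b),
      hsplit (fun k => τ (σ a) - τ k) (σ a) (hmem a),
      herase b, herase a, Finset.prod_map, Finset.prod_map]
    simp only [RelEmbedding.coe_toEmbedding]
    ring
  rw [hfact, Matrix.det_mul, Matrix.det_mul, Matrix.det_diagonal, Matrix.det_diagonal,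
    det_core S.card (fun a => τ (σ a)) η hη (fun a b h => hinj (hτ h))]
  have hp : ∏ b : Fin S.card, p (σ b) = ∏ k ∈ S, p k := by
    have h := Finset.prod_map Finset.univ σ.toEmbedding p
    rw [hmap] at h
    exact h.symm
  have hDne : ∀ a : Fin S.card, (∏ c ∈ Finset.univ.erase a, (τ (σ a) - τ (σ c))) ≠ 0 := by
    intro a
    refine Finset.prod_ne_zero_iff.mpr fun c hc => sub_ne_zero_of_ne fun h => ?_
    exact (Finset.mem_erase.mp hc).1.symm (hinj (hτ h))
  have hmain : (∏ a : Fin S.card,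
        (∏ j ∈ Sᶜ, (η * τ (σ a) - η⁻¹ * τ j)) /
          ((∏ j ∈ Sᶜ, (τ (σ a) - τ j)) *
            ∏ c ∈ Finset.univ.erase a, (τ (σ a) - τ (σ c)))) *
      (∏ b : Fin S.card, ∏ c ∈ Finset.univ.erase b, (τ (σ b) - τ (σ c)))
      = ∏ i ∈ S, ∏ j ∈ Sᶜ, (η * τ i - η⁻¹ * τ j) / (τ i - τ j) := by
    rw [← Finset.prod_mul_distrib]
    have hterm : ∀ a : Fin S.card,
        (∏ j ∈ Sᶜ, (η * τ (σ a) - η⁻¹ * τ j)) /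
          ((∏ j ∈ Sᶜ, (τ (σ a) - τ j)) *
            ∏ c ∈ Finset.univ.erase a, (τ (σ a) - τ (σ c))) *
          (∏ c ∈ Finset.univ.erase a, (τ (σ a) - τ (σ c)))
        = ∏ j ∈ Sᶜ, (η * τ (σ a) - η⁻¹ * τ j) / (τ (σ a) - τ j) := by
      intro a
      rw [Finset.prod_div_distrib, div_mul_eq_div_div, div_mul_cancel₀ _ (hDne a)]
    rw [Finset.prod_congr rfl fun a _ => hterm a]
    have h := Finset.prod_map Finset.univ σ.toEmbedding
      (fun i => ∏ j ∈ Sᶜ, (η * τ i - η⁻¹ * τ j) / (τ i - τ j))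
    rw [hmap] at h
    exact h.symm
  rw [hp, ← hmain]

/-- The characteristic polynomial of the trigonometric Ruijsenaars–Schneider Lax matrix
expands in the classical tRS Hamiltonians
`T_r = Σ_{|I|=r} (∏_{i∈I, j∉I} (ητ_i − η⁻¹τ_j)/(τ_i − τ_j)) ∏_{k∈I} p_k`. -/
theorem tRS_charpoly_hamiltonians (N : ℕ) (hN : 1 ≤ N) (p τ : Fin N → ℂ)
    (hτ : Function.Injective τ) (η : ℂ) (hη : η ≠ 0) (u : ℂ) :
    (u • (1 : Matrix (Fin N) (Fin N) ℂ) - trsLax N p τ η).det =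
      ∑ r ∈ Finset.range (N + 1), (-1 : ℂ) ^ r * u ^ (N - r) *
        ∑ I ∈ Finset.powersetCard r (Finset.univ : Finset (Fin N)),
          (∏ i ∈ I, ∏ j ∈ Iᶜ, (η * τ i - η⁻¹ * τ j) / (τ i - τ j)) * ∏ k ∈ I, p k := by
  classical
  set L := trsLax N p τ η with hL
  set F : Finset (Fin N) → ℂ := fun S =>
    (∏ i ∈ S, ∏ j ∈ Sᶜ, (η * τ i - η⁻¹ * τ j) / (τ i - τ j)) * ∏ k ∈ S, p k with hF
  have step1 : (u • (1 : Matrix (Fin N) (Fin N) ℂ) - L).det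
      = ∑ S : Finset (Fin N), u ^ S.card * ((-1 : ℂ) ^ Sᶜ.card * F Sᶜ) := by
    rw [sub_eq_add_neg, det_smul_one_add]
    refine Finset.sum_congr rfl fun S _ => ?_
    congr 1
    have hneg : (Matrix.of fun i j : {x // x ∈ Sᶜ} => (-L) i j)
        = -(Matrix.of fun i j : {x // x ∈ Sᶜ} => L i j) := by
      ext i j; simp
    rw [hneg, Matrix.det_neg, Fintype.card_coe, trs_minor N p τ hτ η hη Sᶜ]
  rw [step1]
  have step2 : ∑ S : Finset (Fin N), u ^ S.card * ((-1 : ℂ) ^ Sᶜ.card * F Sᶜ)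
      = ∑ S : Finset (Fin N), u ^ Sᶜ.card * ((-1 : ℂ) ^ S.card * F S) :=
    (Fintype.sum_bijective (fun S : Finset (Fin N) => Sᶜ) compl_involutive.bijective
      (fun S => u ^ Sᶜ.card * ((-1 : ℂ) ^ S.card * F S))
      (fun S => u ^ S.card * ((-1 : ℂ) ^ Sᶜ.card * F Sᶜ))
      (fun S => by simp only [compl_compl])).symm
  rw [step2]
  have step3 : ∑ S : Finset (Fin N), u ^ Sᶜ.card * ((-1 : ℂ) ^ S.card * F S)
      = ∑ r ∈ Finset.range (N + 1), ∑ S ∈ Finset.powersetCard r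
          (Finset.univ : Finset (Fin N)), u ^ Sᶜ.card * ((-1 : ℂ) ^ S.card * F S) := by
    rw [← Finset.powerset_univ, Finset.sum_powerset]
    congr 1
    rw [Finset.card_univ, Fintype.card_fin]
  rw [step3]
  refine Finset.sum_congr rfl fun r hr => ?_
  rw [Finset.mul_sum]
  refine Finset.sum_congr rfl fun S hS => ?_
  have hcard : S.card = r := (Finset.mem_powersetCard_univ.mp hS)
  have hcompl : Sᶜ.card = N - r := by
    rw [Finset.card_compl, hcard, Fintype.card_fin]
  rw [hcard, hcompl, hF]
  ring
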